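/- For each i ∈ I let ω_i > 0 and {f_{i,j}}_{j∈J_i} be a frame for its closed span W_i with bounds A_i, B_i, where 0 < inf A_i and sup B_i < ∞. Then the combined family {ω_i f_{i,j}}_{i∈I, j∈J_i} is a frame for H if and only if {(W_i, ω_i)} is a fusion frame for H. -/

import Mathlib

open scoped InnerProductSpace

/-- Orthogonal projection onto a complete subspace, as an operator `H →L H`. -/
noncomputable def fusionProj {H : Type*} [NormedAddCommGroup H] [InnerProductSpace ℂ H]
    (K : Submodule ℂ H) [CompleteSpace K] : H →L[ℂ] H :=
  K.subtypeL.comp (Submodule.orthogonalProjection K)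

lemma fusionProj_mem {H : Type*} [NormedAddCommGroup H] [InnerProductSpace ℂ H]
    (K : Submodule ℂ H) [CompleteSpace K] (x : H) : fusionProj K x ∈ K :=
  (Submodule.orthogonalProjection K x).2

lemma inner_fusionProj_eq {H : Type*} [NormedAddCommGroup H] [InnerProductSpace ℂ H]
    (K : Submodule ℂ H) [CompleteSpace K] {v : H} (hv : v ∈ K) (x : H) :
    ⟪v, x⟫_ℂ = ⟪v, fusionProj K x⟫_ℂ := by
  have h : x - fusionProj K x ∈ Kᗮ := K.sub_starProjection_mem_orthogonal x
  have h0 : ⟪v, x - fusionProj K x⟫_ℂ = 0 := h v hv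
  rw [inner_sub_right] at h0
  exact sub_eq_zero.mp h0

lemma norm_inner_real_smul {H : Type*} [NormedAddCommGroup H] [InnerProductSpace ℂ H]
    {r : ℝ} (hr : 0 ≤ r) (v x : H) : ‖⟪r • v, x⟫_ℂ‖ ^ 2 = r ^ 2 * ‖⟪v, x⟫_ℂ‖ ^ 2 := by
  rw [← algebraMap_smul ℂ r v, inner_smul_left]
  rw [norm_mul, RCLike.norm_conj, mul_pow]
  congr 2
  simp [abs_of_nonneg hr]

/-- For each `i` let `ω i > 0` and `{f i j}` be a frame for its closed span `W i` with
bounds `A i, B i`, where `0 < inf A i` and `sup B i < ∞`. Then `{ω i • f i j}` is a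
frame for `H` if and only if `{(W i, ω i)}` is a fusion frame for `H`. -/
theorem combined_frame_iff_fusion_frame
    {H : Type*} [NormedAddCommGroup H] [InnerProductSpace ℂ H] [CompleteSpace H]
    {ι : Type*} {J : ι → Type*} (f : ∀ i, J i → H)
    (ω : ι → ℝ) (hω : ∀ i, 0 < ω i)
    (W : ι → Submodule ℂ H) [∀ i, CompleteSpace (W i)]
    (hW : ∀ i, W i = (Submodule.span ℂ (Set.range (f i))).topologicalClosure)
    (A B : ι → ℝ) (hAB : ∀ i, A i ≤ B i)
    (hlocal : ∀ i, ∀ g ∈ W i,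
      A i * ‖g‖ ^ 2 ≤ ∑' j, ‖⟪f i j, g⟫_ℂ‖ ^ 2 ∧ ∑' j, ‖⟪f i j, g⟫_ℂ‖ ^ 2 ≤ B i * ‖g‖ ^ 2)
    (A₀ B₀ : ℝ) (hA₀ : 0 < A₀) (hA₀le : ∀ i, A₀ ≤ A i) (hB₀ : ∀ i, B i ≤ B₀) :
    (∃ C D : ℝ, 0 < C ∧ C ≤ D ∧ ∀ x : H,
        C * ‖x‖ ^ 2 ≤ ∑' p : Σ i, J i, ‖⟪ω p.1 • f p.1 p.2, x⟫_ℂ‖ ^ 2 ∧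
          ∑' p : Σ i, J i, ‖⟪ω p.1 • f p.1 p.2, x⟫_ℂ‖ ^ 2 ≤ D * ‖x‖ ^ 2) ↔
      (∃ C D : ℝ, 0 < C ∧ C ≤ D ∧ ∀ x : H,
        C * ‖x‖ ^ 2 ≤ ∑' i, (ω i) ^ 2 * ‖fusionProj (W i) x‖ ^ 2 ∧
          ∑' i, (ω i) ^ 2 * ‖fusionProj (W i) x‖ ^ 2 ≤ D * ‖x‖ ^ 2) := by
  -- basic facts
  have hmem : ∀ i j, f i j ∈ W i := by
    intro i j
    rw [hW i]
    exact Submodule.le_topologicalClosure _ (Submodule.subset_span (Set.mem_range_self j))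
  have hterm : ∀ (x : H) (p : Σ i, J i),
      ‖⟪ω p.1 • f p.1 p.2, x⟫_ℂ‖ ^ 2
        = ω p.1 ^ 2 * ‖⟪f p.1 p.2, fusionProj (W p.1) x⟫_ℂ‖ ^ 2 := by
    intro x p
    rw [norm_inner_real_smul (hω p.1).le, inner_fusionProj_eq (W p.1) (hmem p.1 p.2) x]
  -- sandwich for the local frame sums applied to the projection
  have hsand : ∀ i (x : H),
      A₀ * ‖fusionProj (W i) x‖ ^ 2 ≤ (∑' j, ‖⟪f i j, fusionProj (W i) x⟫_ℂ‖ ^ 2) ∧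
        (∑' j, ‖⟪f i j, fusionProj (W i) x⟫_ℂ‖ ^ 2) ≤ B₀ * ‖fusionProj (W i) x‖ ^ 2 := by
    intro i x
    have h := hlocal i (fusionProj (W i) x) (fusionProj_mem (W i) x)
    have hn : (0:ℝ) ≤ ‖fusionProj (W i) x‖ ^ 2 := by positivity
    exact ⟨le_trans (mul_le_mul_of_nonneg_right (hA₀le i) hn) h.1,
      le_trans h.2 (mul_le_mul_of_nonneg_right (hB₀ i) hn)⟩
  have hsumj : ∀ i (x : H), Summable fun j => ‖⟪f i j, fusionProj (W i) x⟫_ℂ‖ ^ 2 := by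
    intro i x
    by_cases hP : fusionProj (W i) x = 0
    · simp only [hP, inner_zero_right, norm_zero]
      simpa using summable_zero
    · by_contra hns
      have h0 := (hsand i x).1
      rw [tsum_eq_zero_of_not_summable hns] at h0
      have hpos : 0 < ‖fusionProj (W i) x‖ ^ 2 := by
        have := norm_pos_iff.mpr hP
        positivity
      nlinarith
  -- the fiberwise sums
  have hfib_eq : ∀ (x : H) (i : ι),
      (∑' j, ‖⟪ω i • f i j, x⟫_ℂ‖ ^ 2)
        = ω i ^ 2 * ∑' j, ‖⟪f i j, fusionProj (W i) x⟫_ℂ‖ ^ 2 := by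
    intro x i
    calc (∑' j, ‖⟪ω i • f i j, x⟫_ℂ‖ ^ 2)
        = ∑' j, ω i ^ 2 * ‖⟪f i j, fusionProj (W i) x⟫_ℂ‖ ^ 2 :=
          tsum_congr fun j => hterm x ⟨i, j⟩
      _ = _ := tsum_mul_left
  have hfib_summable : ∀ (x : H) (i : ι),
      Summable fun j => ‖⟪ω i • f i j, x⟫_ℂ‖ ^ 2 := by
    intro x i
    exact Summable.congr ((hsumj i x).mul_left (ω i ^ 2))
      (fun j => (hterm x ⟨i, j⟩).symm)
  have hfib_lb : ∀ (x : H) (i : ι),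
      A₀ * (ω i ^ 2 * ‖fusionProj (W i) x‖ ^ 2) ≤ ∑' j, ‖⟪ω i • f i j, x⟫_ℂ‖ ^ 2 := by
    intro x i
    rw [hfib_eq x i]
    nlinarith [(hsand i x).1, sq_nonneg (ω i)]
  have hfib_ub : ∀ (x : H) (i : ι),
      (∑' j, ‖⟪ω i • f i j, x⟫_ℂ‖ ^ 2) ≤ B₀ * (ω i ^ 2 * ‖fusionProj (W i) x‖ ^ 2) := by
    intro x i
    rw [hfib_eq x i]
    nlinarith [(hsand i x).2, sq_nonneg (ω i)]
  rcases isEmpty_or_nonempty ι with hι | hι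
  · -- empty index: everything is trivial
    have hes : IsEmpty (Σ i, J i) := ⟨fun p => IsEmpty.elim hι p.1⟩
    have he1 : ∀ (x : H), (∑' p : Σ i, J i, ‖⟪ω p.1 • f p.1 p.2, x⟫_ℂ‖ ^ 2) = 0 :=
      fun x => tsum_empty
    have he2 : ∀ (x : H), (∑' i, (ω i) ^ 2 * ‖fusionProj (W i) x‖ ^ 2) = 0 :=
      fun x => tsum_empty
    constructor
    · rintro ⟨C, D, hC, hCD, h⟩
      refine ⟨1, 1, one_pos, le_refl _, fun x => ?_⟩
      have hx := (h x).1
      rw [he1 x] at hx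
      have hx0 : ‖x‖ ^ 2 = 0 := by nlinarith [sq_nonneg ‖x‖]
      rw [he2 x, hx0]
      norm_num
    · rintro ⟨C, D, hC, hCD, h⟩
      refine ⟨1, 1, one_pos, le_refl _, fun x => ?_⟩
      have hx := (h x).1
      rw [he2 x] at hx
      have hx0 : ‖x‖ ^ 2 = 0 := by nlinarith [sq_nonneg ‖x‖]
      rw [he1 x, hx0]
      norm_num
  · -- nonempty index
    obtain ⟨i₀⟩ := hι
    have hA₀B₀ : A₀ ≤ B₀ := le_trans (hA₀le i₀) (le_trans (hAB i₀) (hB₀ i₀))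
    have hB₀pos : 0 < B₀ := lt_of_lt_of_le hA₀ hA₀B₀
    constructor
    · -- combined frame → fusion frame
      rintro ⟨C, D, hC, hCD, h⟩
      refine ⟨C / B₀, D / A₀, by positivity, ?_, fun x => ?_⟩
      · rw [div_le_div_iff₀ hB₀pos hA₀]
        nlinarith
      · by_cases hx0 : x = 0
        · simp [hx0]
        · have hxpos : 0 < ‖x‖ ^ 2 := by
            have := norm_pos_iff.mpr hx0
            positivity
          have hSig : Summable fun p : (i : ι) × J i => ‖⟪ω p.1 • f p.1 p.2, x⟫_ℂ‖ ^ 2 := by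
            by_contra hns
            have h0 := (h x).1
            rw [tsum_eq_zero_of_not_summable hns] at h0
            nlinarith
          have hfib_sum : Summable fun i => ∑' j, ‖⟪ω i • f i j, x⟫_ℂ‖ ^ 2 := hSig.sigma
          have htsum : (∑' p : Σ i, J i, ‖⟪ω p.1 • f p.1 p.2, x⟫_ℂ‖ ^ 2)
              = ∑' i, ∑' j, ‖⟪ω i • f i j, x⟫_ℂ‖ ^ 2 := Summable.tsum_sigma hSig
          have hSsum : Summable fun i => ω i ^ 2 * ‖fusionProj (W i) x‖ ^ 2 := by
            refine Summable.of_nonneg_of_le (fun i => by positivity) (fun i => ?_)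
              (hfib_sum.div_const A₀)
            rw [le_div_iff₀ hA₀, mul_comm]
            exact hfib_lb x i
          constructor
          · have hup : (∑' i, ∑' j, ‖⟪ω i • f i j, x⟫_ℂ‖ ^ 2)
                ≤ B₀ * ∑' i, ω i ^ 2 * ‖fusionProj (W i) x‖ ^ 2 := by
              rw [← tsum_mul_left]
              exact Summable.tsum_le_tsum (fun i => hfib_ub x i) hfib_sum (hSsum.mul_left B₀)
            have hlow := (h x).1
            rw [htsum] at hlow
            rw [div_mul_eq_mul_div, div_le_iff₀ hB₀pos, mul_comm _ B₀]
            linarith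
          · have hlo : A₀ * (∑' i, ω i ^ 2 * ‖fusionProj (W i) x‖ ^ 2)
                ≤ ∑' i, ∑' j, ‖⟪ω i • f i j, x⟫_ℂ‖ ^ 2 := by
              rw [← tsum_mul_left]
              exact Summable.tsum_le_tsum (fun i => hfib_lb x i) (hSsum.mul_left A₀) hfib_sum
            have hup := (h x).2
            rw [htsum] at hup
            rw [div_mul_eq_mul_div, le_div_iff₀ hA₀, mul_comm _ A₀]
            linarith
    · -- fusion frame → combined frame
      rintro ⟨C, D, hC, hCD, h⟩
      refine ⟨A₀ * C, B₀ * D, by positivity, by nlinarith, fun x => ?_⟩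
      by_cases hx0 : x = 0
      · simp [hx0]
      · have hxpos : 0 < ‖x‖ ^ 2 := by
          have := norm_pos_iff.mpr hx0
          positivity
        have hSsum : Summable fun i => ω i ^ 2 * ‖fusionProj (W i) x‖ ^ 2 := by
          by_contra hns
          have h0 := (h x).1
          rw [tsum_eq_zero_of_not_summable hns] at h0
          nlinarith
        have hfib_sum : Summable fun i => ∑' j, ‖⟪ω i • f i j, x⟫_ℂ‖ ^ 2 := by
          refine Summable.of_nonneg_of_le
            (fun i => tsum_nonneg fun j => by positivity)
            (fun i => hfib_ub x i) (hSsum.mul_left B₀)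
        have hSig : Summable fun p : (i : ι) × J i => ‖⟪ω p.1 • f p.1 p.2, x⟫_ℂ‖ ^ 2 :=
          (summable_sigma_of_nonneg (fun p => by positivity)).mpr
            ⟨fun i => hfib_summable x i, hfib_sum⟩
        have htsum : (∑' p : Σ i, J i, ‖⟪ω p.1 • f p.1 p.2, x⟫_ℂ‖ ^ 2)
            = ∑' i, ∑' j, ‖⟪ω i • f i j, x⟫_ℂ‖ ^ 2 := Summable.tsum_sigma hSig
        constructor
        · have hlo : A₀ * (∑' i, ω i ^ 2 * ‖fusionProj (W i) x‖ ^ 2)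
              ≤ ∑' i, ∑' j, ‖⟪ω i • f i j, x⟫_ℂ‖ ^ 2 := by
            rw [← tsum_mul_left]
            exact Summable.tsum_le_tsum (fun i => hfib_lb x i) (hSsum.mul_left A₀) hfib_sum
          have h1 := (h x).1
          rw [htsum, mul_assoc]
          calc A₀ * (C * ‖x‖ ^ 2) ≤ A₀ * ∑' i, ω i ^ 2 * ‖fusionProj (W i) x‖ ^ 2 :=
                mul_le_mul_of_nonneg_left h1 hA₀.le
            _ ≤ _ := hlo
        · have hup : (∑' i, ∑' j, ‖⟪ω i • f i j, x⟫_ℂ‖ ^ 2)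
              ≤ B₀ * ∑' i, ω i ^ 2 * ‖fusionProj (W i) x‖ ^ 2 := by
            rw [← tsum_mul_left]
            exact Summable.tsum_le_tsum (fun i => hfib_ub x i) hfib_sum (hSsum.mul_left B₀)
          have h2 := (h x).2
          rw [htsum, mul_assoc]
          calc (∑' i, ∑' j, ‖⟪ω i • f i j, x⟫_ℂ‖ ^ 2)
              ≤ B₀ * ∑' i, ω i ^ 2 * ‖fusionProj (W i) x‖ ^ 2 := hup
            _ ≤ B₀ * (D * ‖x‖ ^ 2) := mul_le_mul_of_nonneg_left h2 hB₀pos.le
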